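/- Let G_{-j} ⊂ M_n(ℂ) be the space of matrices supported on the j-th subdiagonal (entries (i,k) with k - i = -j), and Tr_{-j}(ξ) = Tr(b^j ξ) the sum of subdiagonal entries. For 0 ≤ j ≤ n-2, the map ad(b): G_{-(j+1)} → G_{-j}, X ↦ [b, X], is injective and its image is exactly {ξ ∈ G_{-j} : Tr_{-j}(ξ) = 0}. -/
import Mathlib


open Matrix Finset

noncomputable section

/-- α = e^{2πi/n}, a primitive n-th root of unity. -/
noncomputable def rootα (n : ℕ) : ℂ := Complex.exp (2 * Real.pi * Complex.I / n)

/-- σ_k = (1-α^k)/(1-α). -/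
noncomputable def sigc (n k : ℕ) : ℂ := (1 - rootα n ^ k) / (1 - rootα n)

/-- Λ = Σ_{k=1}^{n-1} σ_k e_{k+1,k} (1-based), i.e. entry (j+1, j) is σ_{j+1} in 0-based indices. -/
noncomputable def Lam (n : ℕ) : Matrix (Fin n) (Fin n) ℂ :=
  Matrix.of (fun i j => if (i : ℕ) = (j : ℕ) + 1 then sigc n ((j : ℕ) + 1) else 0)

/-- b = e_{12} + e_{23} + ⋯ + e_{n-1,n}, the upper shift matrix. -/
def bMat (n : ℕ) : Matrix (Fin n) (Fin n) ℂ :=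
  Matrix.of (fun i j => if (j : ℕ) = (i : ℕ) + 1 then 1 else 0)

/-- a = diag(1, α, α², …, α^{n-1}). -/
noncomputable def aMat (n : ℕ) : Matrix (Fin n) (Fin n) ℂ :=
  Matrix.diagonal (fun i => rootα n ^ (i : ℕ))

/-- e_{n1}, the matrix with 1 in the bottom-left corner. -/
def enone (n : ℕ) : Matrix (Fin n) (Fin n) ℂ :=
  Matrix.of (fun i j => if (i : ℕ) = n - 1 ∧ (j : ℕ) = 0 then 1 else 0)

/-- c_k = 1/(σ_1 ⋯ σ_k), with c_0 = 1. -/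
noncomputable def cCoef (n k : ℕ) : ℂ := (∏ m ∈ Finset.Icc 1 k, sigc n m)⁻¹

/-- φ_n(λ) = Σ_{i=0}^{n-1} c_i Λ^i λ^i. -/
noncomputable def phiMat (n : ℕ) (t : ℂ) : Matrix (Fin n) (Fin n) ℂ :=
  ∑ i ∈ Finset.range n, (cCoef n i * t ^ i) • Lam n ^ i

private lemma sum_ite_coe {n : ℕ} (m : ℕ) (f : Fin n → ℂ) :
    (∑ k : Fin n, if (k : ℕ) = m then f k else 0) =
      if h : m < n then f ⟨m, h⟩ else 0 := by
  split_ifs with h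
  · rw [Finset.sum_eq_single (⟨m, h⟩ : Fin n)]
    · simp
    · intro k _ hk
      have : (k : ℕ) ≠ m := by simpa [Fin.ext_iff] using hk
      simp [this]
    · simp
  · refine Finset.sum_eq_zero fun k _ => ?_
    have : (k : ℕ) ≠ m := fun e => h (e ▸ k.isLt)
    simp [this]

private lemma b_mul_apply {n : ℕ} (X : Matrix (Fin n) (Fin n) ℂ) (p q : Fin n) :
    (bMat n * X) p q = if h : (p : ℕ) + 1 < n then X ⟨(p : ℕ) + 1, h⟩ q else 0 := by
  rw [Matrix.mul_apply]
  simp only [bMat, Matrix.of_apply, ite_mul, one_mul, zero_mul]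
  exact sum_ite_coe _ _

private lemma mul_b_apply {n : ℕ} (X : Matrix (Fin n) (Fin n) ℂ) (p q : Fin n) :
    (X * bMat n) p q =
      if 0 < (q : ℕ) then X p ⟨(q : ℕ) - 1, lt_of_le_of_lt (Nat.sub_le _ _) q.isLt⟩ else 0 := by
  rw [Matrix.mul_apply]
  simp only [bMat, Matrix.of_apply, mul_ite, mul_one, mul_zero]
  by_cases hq : 0 < (q : ℕ)
  · rw [if_pos hq]
    have : ∀ k : Fin n, (if (q : ℕ) = (k : ℕ) + 1 then X p k else 0)
        = (if (k : ℕ) = (q : ℕ) - 1 then X p k else 0) := by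
      intro k
      by_cases h : (q : ℕ) = (k : ℕ) + 1
      · have h2 : (k : ℕ) = (q : ℕ) - 1 := by omega
        rw [if_pos h, if_pos h2]
      · have h2 : (k : ℕ) ≠ (q : ℕ) - 1 := by omega
        rw [if_neg h, if_neg h2]
    rw [Finset.sum_congr rfl fun k _ => this k,
      sum_ite_coe ((q : ℕ) - 1) (fun k => X p k),
      dif_pos (lt_of_le_of_lt (Nat.sub_le _ _) q.isLt)]
  · rw [if_neg hq]
    refine Finset.sum_eq_zero fun k _ => ?_
    have : (q : ℕ) ≠ (k : ℕ) + 1 := by omega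
    simp [this]

private lemma comm_apply {n : ℕ} (X : Matrix (Fin n) (Fin n) ℂ) (p q : Fin n) :
    (bMat n * X - X * bMat n) p q =
      (if h : (p : ℕ) + 1 < n then X ⟨(p : ℕ) + 1, h⟩ q else 0) -
      (if 0 < (q : ℕ) then X p ⟨(q : ℕ) - 1, lt_of_le_of_lt (Nat.sub_le _ _) q.isLt⟩ else 0) := by
  rw [Matrix.sub_apply, b_mul_apply, mul_b_apply]

private lemma bpow_apply {n : ℕ} (j : ℕ) (p q : Fin n) :
    (bMat n ^ j) p q = if (q : ℕ) = (p : ℕ) + j then 1 else 0 := by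
  induction j generalizing p q with
  | zero => simp [Matrix.one_apply, Fin.ext_iff, eq_comm]
  | succ j ih =>
    rw [pow_succ, Matrix.mul_apply]
    simp only [ih]
    simp only [bMat, Matrix.of_apply, ite_mul, one_mul, zero_mul]
    have : ∀ k : Fin n, (if (k : ℕ) = (p : ℕ) + j then (if (q:ℕ) = (k:ℕ) + 1 then (1:ℂ) else 0) else 0)
        = (if (k : ℕ) = (p : ℕ) + j then (if (q:ℕ) = (p:ℕ) + j + 1 then (1:ℂ) else 0) else 0) := by
      intro k
      by_cases h : (k : ℕ) = (p : ℕ) + j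
      · simp [h]
      · simp [h]
    rw [Finset.sum_congr rfl fun k _ => this k,
      sum_ite_coe ((p:ℕ) + j) (fun _ => if (q:ℕ) = (p:ℕ) + j + 1 then (1:ℂ) else 0)]
    split_ifs <;> first | rfl | (exfalso; omega)

/-- diagonal-j entries of ξ, indexed by column r. -/
private def dfun (n j : ℕ) (ξ : Matrix (Fin n) (Fin n) ℂ) (r : ℕ) : ℂ :=
  if h : r + j < n then ξ ⟨r + j, h⟩ ⟨r, by omega⟩ else 0

/-- diagonal-(j+1) entries of X, indexed by column r. -/
private def gfun (n j : ℕ) (X : Matrix (Fin n) (Fin n) ℂ) (r : ℕ) : ℂ :=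
  if h : r + j + 1 < n then X ⟨r + j + 1, h⟩ ⟨r, by omega⟩ else 0

private lemma trace_bpow {n : ℕ} (j : ℕ) (ξ : Matrix (Fin n) (Fin n) ℂ) :
    Matrix.trace (bMat n ^ j * ξ) = ∑ r ∈ Finset.range n, dfun n j ξ r := by
  rw [← Fin.sum_univ_eq_sum_range (fun r => dfun n j ξ r) n, Matrix.trace]
  refine Finset.sum_congr rfl fun p _ => ?_
  rw [Matrix.diag_apply, Matrix.mul_apply]
  simp only [bpow_apply, ite_mul, one_mul, zero_mul]
  rw [sum_ite_coe ((p:ℕ) + j) (fun k => ξ k p)]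
  unfold dfun
  split_ifs with h <;> rfl

private lemma dfun_comm {n j : ℕ} (X : Matrix (Fin n) (Fin n) ℂ) (r : ℕ) :
    dfun n j (bMat n * X - X * bMat n) r =
      gfun n j X r - (if 0 < r then gfun n j X (r - 1) else 0) := by
  unfold dfun gfun
  by_cases hr : r + j < n
  · rw [dif_pos hr, comm_apply]
    simp only [Fin.val_mk]
    split_ifs <;>
      first
        | rfl
        | omega
        | (congr 1
           exact congrFun (congrArg _ (Fin.ext (by simp only [Fin.val_mk]; omega))) _)
  · rw [dif_neg hr]
    split_ifs <;> first | (exfalso; omega) | simp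

private lemma comm_supp {n j : ℕ} (X : Matrix (Fin n) (Fin n) ℂ)
    (hX : ∀ p q : Fin n, (p : ℕ) ≠ (q : ℕ) + (j + 1) → X p q = 0) :
    ∀ p q : Fin n, (p : ℕ) ≠ (q : ℕ) + j → (bMat n * X - X * bMat n) p q = 0 := by
  intro p q hpq
  rw [comm_apply]
  split_ifs with h1 h2
  · rw [hX _ _ (by simp only [Fin.val_mk]; omega), hX _ _ (by simp only [Fin.val_mk]; omega),
      sub_zero]
  · rw [hX _ _ (by simp only [Fin.val_mk]; omega), sub_zero]
  · rw [hX _ _ (by simp only [Fin.val_mk]; omega), zero_sub, neg_zero]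
  · rw [sub_zero]

private lemma eq_of_diag {n j : ℕ} (A B : Matrix (Fin n) (Fin n) ℂ)
    (hA : ∀ p q : Fin n, (p : ℕ) ≠ (q : ℕ) + j → A p q = 0)
    (hB : ∀ p q : Fin n, (p : ℕ) ≠ (q : ℕ) + j → B p q = 0)
    (h : ∀ r, dfun n j A r = dfun n j B r) : A = B := by
  ext p q
  by_cases hpq : (p : ℕ) = (q : ℕ) + j
  · have h1 : (q : ℕ) + j < n := by omega
    have h2 := h (q : ℕ)
    unfold dfun at h2
    rw [dif_pos h1, dif_pos h1] at h2
    have hp : p = ⟨(q : ℕ) + j, h1⟩ := Fin.ext (by simp only [Fin.val_mk]; omega)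
    calc A p q = A ⟨(q : ℕ) + j, h1⟩ q := by rw [hp]
    _ = B ⟨(q : ℕ) + j, h1⟩ q := h2
    _ = B p q := by rw [hp]
  · rw [hA p q hpq, hB p q hpq]

private lemma gfun_zero_of_ge {n j : ℕ} (X : Matrix (Fin n) (Fin n) ℂ) (r : ℕ)
    (h : ¬ r + j + 1 < n) : gfun n j X r = 0 := by
  unfold gfun; rw [dif_neg h]

theorem stmt16 (n : ℕ) (hn : 2 ≤ n) (j : ℕ) (hj : j ≤ n - 2) :
    (∀ X Y : Matrix (Fin n) (Fin n) ℂ,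
      (∀ p q : Fin n, (p : ℕ) ≠ (q : ℕ) + (j + 1) → X p q = 0) →
      (∀ p q : Fin n, (p : ℕ) ≠ (q : ℕ) + (j + 1) → Y p q = 0) →
      bMat n * X - X * bMat n = bMat n * Y - Y * bMat n → X = Y) ∧
    (∀ ξ : Matrix (Fin n) (Fin n) ℂ,
      ((∀ p q : Fin n, (p : ℕ) ≠ (q : ℕ) + j → ξ p q = 0) ∧
        Matrix.trace (bMat n ^ j * ξ) = 0) ↔
      ∃ X : Matrix (Fin n) (Fin n) ℂ,
        (∀ p q : Fin n, (p : ℕ) ≠ (q : ℕ) + (j + 1) → X p q = 0) ∧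
        bMat n * X - X * bMat n = ξ) := by
  have hj' : j + 2 ≤ n := by omega
  constructor
  · -- injectivity
    intro X Y hX hY hcomm
    have hcomm0 : bMat n * (X - Y) - (X - Y) * bMat n = 0 := by
      have h0 : bMat n * (X - Y) - (X - Y) * bMat n
          = (bMat n * X - X * bMat n) - (bMat n * Y - Y * bMat n) := by noncomm_ring
      rw [h0, hcomm, sub_self]
    have hd : ∀ r, dfun n j (bMat n * (X - Y) - (X - Y) * bMat n) r = 0 := by
      intro r
      rw [hcomm0]
      unfold dfun
      split_ifs <;> simp
    have hstep : ∀ r, gfun n j (X - Y) r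
        = (if 0 < r then gfun n j (X - Y) (r - 1) else 0) := by
      intro r
      have h2 := dfun_comm (X - Y) (j := j) r
      rw [hd r] at h2
      exact sub_eq_zero.mp h2.symm
    have hg0 : ∀ r, gfun n j (X - Y) r = 0 := by
      intro r
      induction r with
      | zero => rw [hstep 0, if_neg (lt_irrefl 0)]
      | succ r ih => rw [hstep (r + 1), if_pos (Nat.succ_pos r), Nat.add_sub_cancel, ih]
    ext p q
    by_cases hpq : (p : ℕ) = (q : ℕ) + (j + 1)
    · have h1 : (q : ℕ) + j + 1 < n := by omega
      have hp : p = ⟨(q : ℕ) + j + 1, h1⟩ := Fin.ext (by simp only [Fin.val_mk]; omega)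
      have key : (X - Y) p q = 0 := by
        have e : (X - Y) p q = gfun n j (X - Y) (q : ℕ) := by
          unfold gfun
          rw [dif_pos h1]
          exact congrFun (congrArg _ hp) q
        rw [e, hg0]
      have : X p q - Y p q = 0 := by rw [← Matrix.sub_apply]; exact key
      exact sub_eq_zero.mp this
    · rw [hX p q hpq, hY p q hpq]
  · -- characterization of the image
    intro ξ
    constructor
    · rintro ⟨hsupp, htr⟩
      rw [trace_bpow] at htr
      set Xc : Matrix (Fin n) (Fin n) ℂ := Matrix.of (fun p q =>
        if (p : ℕ) = (q : ℕ) + (j + 1)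
        then (∑ r ∈ Finset.range ((q : ℕ) + 1), dfun n j ξ r) else 0) with hXc
      have hXsupp : ∀ p q : Fin n, (p : ℕ) ≠ (q : ℕ) + (j + 1) → Xc p q = 0 := by
        intro p q hpq
        simp only [hXc, Matrix.of_apply, if_neg hpq]
      refine ⟨Xc, hXsupp, ?_⟩
      -- the commutator and ξ are both supported on diagonal j and have equal dfun
      have hgX : ∀ r, gfun n j Xc r
          = if r + j + 1 < n then (∑ s ∈ Finset.range (r + 1), dfun n j ξ s) else 0 := by
        intro r
        unfold gfun
        split_ifs with h
        · simp only [hXc, Matrix.of_apply, Fin.val_mk]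
          rw [if_pos (show r + j + 1 = r + (j + 1) by omega)]
        · rfl
      have hdzero : ∀ s, ¬ s + j < n → dfun n j ξ s = 0 := by
        intro s hs
        unfold dfun
        rw [dif_neg hs]
      refine eq_of_diag _ _ (comm_supp Xc hXsupp) hsupp ?_
      intro r
      rw [dfun_comm]
      by_cases hr : r + j < n
      · by_cases h1 : r + j + 1 < n
        · rw [hgX r, if_pos h1]
          by_cases h2 : 0 < r
          · rw [if_pos h2, hgX (r - 1), if_pos (by omega),
              show r - 1 + 1 = r by omega, Finset.sum_range_succ]
            ring
          · have hr0 : r = 0 := by omega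
            rw [if_neg h2, hr0, Finset.sum_range_one, sub_zero]
        · -- last column of the diagonal: use the trace condition
          have hsum : ∑ s ∈ Finset.range (r + 1), dfun n j ξ s = 0 := by
            rw [← htr]
            refine Finset.sum_subset ?_ ?_
            · intro s hs
              simp only [Finset.mem_range] at hs ⊢
              omega
            · intro s _ hs
              simp only [Finset.mem_range] at hs
              exact hdzero s (by omega)
          have h2 : 0 < r := by omega
          rw [hgX r, if_neg h1, if_pos h2, hgX (r - 1), if_pos (by omega),
            show r - 1 + 1 = r by omega, zero_sub]
          rw [Finset.sum_range_succ] at hsum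
          unfold dfun
          rw [dif_pos hr]
          unfold dfun at hsum
          rw [dif_pos hr] at hsum
          linear_combination -hsum
      · rw [hdzero r hr, hgX r, if_neg (by omega)]
        by_cases h2 : 0 < r
        · rw [if_pos h2, hgX (r - 1), if_neg (by omega), sub_zero]
        · rw [if_neg h2, sub_zero]
    · rintro ⟨X, hXsupp, hcX⟩
      constructor
      · intro p q hpq
        rw [← hcX]
        exact comm_supp X hXsupp p q hpq
      · rw [trace_bpow, ← hcX]
        have : ∀ r, dfun n j (bMat n * X - X * bMat n) r
            = (if 0 < r + 1 then gfun n j X (r + 1 - 1) else 0)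
              - (if 0 < r then gfun n j X (r - 1) else 0) := by
          intro r
          rw [dfun_comm, if_pos (Nat.succ_pos r), Nat.add_sub_cancel]
        rw [Finset.sum_congr rfl fun r _ => this r, Finset.sum_range_sub
          (fun r => if 0 < r then gfun n j X (r - 1) else 0)]
        rw [if_neg (lt_irrefl 0), sub_zero, if_pos (by omega : 0 < n)]
        exact gfun_zero_of_ge X (n - 1) (by omega)


end
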